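/- Let G and H be DAGs on [n] that are Markov equivalent under d-separation (i.e., have the same skeleton and the same unshielded colliders), let K ⊆ [n], and suppose i → j is an edge of the conditional reachability DAG G*_K. Then at least one of the following holds: (1) i → j is an edge of H*_K; (2) j → i is an edge of H*_K; (3) there exists ℓ ∈ [n] with both ℓ → i and ℓ → j edges of H*_K. -/

import Mathlib

/-- Edge `i → j` of the conditional reachability DAG `G*_K`: there is a directed path
from `i` to `j` in `E` none of whose internal vertices lies in `K`. -/
def ReachEdge {n : ℕ} (E : Fin n → Fin n → Prop) (K : Set (Fin n)) (i j : Fin n) : Prop :=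
  ∃ p : List (Fin n), p.Chain' E ∧ p.head? = some i ∧ p.getLast? = some j ∧
    2 ≤ p.length ∧ ∀ v ∈ (p.drop 1).dropLast, v ∉ K


/-- `E` and `F` have the same skeleton. -/
def SameSkeleton {n : ℕ} (E F : Fin n → Fin n → Prop) : Prop :=
  ∀ i j, (E i j ∨ E j i) ↔ (F i j ∨ F j i)

/-- `(i, k, j)` is an unshielded collider: `i → k ← j` with `i, j` nonadjacent. -/
def UnshieldedCollider {n : ℕ} (E : Fin n → Fin n → Prop) (i k j : Fin n) : Prop :=
  E i k ∧ E j k ∧ i ≠ j ∧ ¬(E i j ∨ E j i)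


def FnPath {n : ℕ} (E : Fin n → Fin n → Prop) (K : Set (Fin n)) (i j : Fin n)
    (m : ℕ) (v : ℕ → Fin n) : Prop :=
  v 0 = i ∧ v m = j ∧ (∀ t < m, E (v t) (v (t+1))) ∧ (∀ t, 0 < t → t < m → v t ∉ K)

lemma fnPath_toReach {n : ℕ} {E : Fin n → Fin n → Prop} {K : Set (Fin n)} {i j : Fin n}
    {m : ℕ} {v : ℕ → Fin n} (hm : 1 ≤ m) (h : FnPath E K i j m v) : ReachEdge E K i j := by
  obtain ⟨h0, hlast, hedge, hint⟩ := h
  refine ⟨(List.range (m+1)).map v, ?_, ?_, ?_, ?_, ?_⟩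
  · change List.IsChain E _
    rw [List.isChain_iff_getElem]
    intro s hs
    simp only [List.length_map, List.length_range] at hs
    simp only [List.get_eq_getElem, List.getElem_map, List.getElem_range]
    exact hedge s (by omega)
  · rw [List.head?_eq_getElem?]
    rw [List.getElem?_eq_getElem (by simp)]
    simp [h0]
  · rw [List.getLast?_eq_getElem?]
    rw [List.getElem?_eq_getElem (by simp)]
    simp [hlast]
  · simp; omega
  · intro x hx
    rw [List.mem_iff_getElem] at hx
    obtain ⟨k, hk, hkx⟩ := hx
    simp only [List.length_dropLast, List.length_drop, List.length_map, List.length_range] at hk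
    rw [List.getElem_dropLast, List.getElem_drop, List.getElem_map, List.getElem_range] at hkx
    subst hkx
    exact hint (1+k) (by omega) (by omega)

lemma reach_toFnPath {n : ℕ} {E : Fin n → Fin n → Prop} {K : Set (Fin n)} {i j : Fin n}
    (h : ReachEdge E K i j) :
    ∃ m v, 1 ≤ m ∧ FnPath E K i j m v := by
  obtain ⟨p, hch, hhd, hlast, hlen, hint⟩ := h
  have hl0 : 0 < p.length := by omega
  rw [List.head?_eq_getElem?, List.getElem?_eq_getElem hl0, Option.some_inj] at hhd
  rw [List.getLast?_eq_getElem?, List.getElem?_eq_getElem (by omega), Option.some_inj] at hlast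
  change List.IsChain E p at hch
  rw [List.isChain_iff_getElem] at hch
  refine ⟨p.length - 1, fun t => p.getD t i, by omega, ?_, ?_, ?_, ?_⟩
  · show p.getD 0 i = i
    rw [List.getD_eq_getElem _ _ hl0]; exact hhd
  · show p.getD (p.length - 1) i = j
    rw [List.getD_eq_getElem _ _ (by omega)]; exact hlast
  · intro t ht
    show E (p.getD t i) (p.getD (t+1) i)
    rw [List.getD_eq_getElem _ _ (by omega), List.getD_eq_getElem _ _ (by omega)]
    simpa using hch t (by omega)
  · intro t ht0 htm
    show p.getD t i ∉ K
    rw [List.getD_eq_getElem _ _ (by omega)]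
    apply hint
    rw [List.mem_iff_getElem]
    refine ⟨t - 1, by simp; omega, ?_⟩
    rw [List.getElem_dropLast, List.getElem_drop]
    congr 1
    omega

lemma main_aux {n : ℕ} (E F : Fin n → Fin n → Prop)
    (hE : ∀ i, ¬ Relation.TransGen E i i)
    (hskel : SameSkeleton E F)
    (huc : ∀ i k j, UnshieldedCollider E i k j ↔ UnshieldedCollider F i k j)
    (K : Set (Fin n)) :
    ∀ (m : ℕ) (i j : Fin n) (v : ℕ → Fin n), 1 ≤ m → FnPath E K i j m v →
      ReachEdge F K i j ∨ ReachEdge F K j i ∨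
        ∃ l : Fin n, ReachEdge F K l i ∧ ReachEdge F K l j := by
  intro m
  induction m using Nat.strong_induction_on with
  | _ m IH =>
  intro i j v hm hp
  classical
  obtain ⟨h0, hlast, hedge, hint⟩ := hp
  by_cases hcol : ∃ t, t+1 < m ∧ F (v t) (v (t+1)) ∧ F (v (t+2)) (v (t+1))
  · -- collider case: shortcut in E
    obtain ⟨t, htm, hfab, hfcb⟩ := hcol
    have hab : E (v t) (v (t+1)) := hedge t (by omega)
    have hbc : E (v (t+1)) (v (t+2)) := hedge (t+1) htm
    have hac : E (v t) (v (t+2)) := by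
      have hne : v t ≠ v (t+2) := by
        intro h
        exact hE (v t) (Relation.TransGen.tail (Relation.TransGen.single hab) (h ▸ hbc))
      have hadj : F (v t) (v (t+2)) ∨ F (v (t+2)) (v t) := by
        by_contra hno
        have hucE : UnshieldedCollider E (v t) (v (t+1)) (v (t+2)) :=
          (huc _ _ _).mpr ⟨hfab, hfcb, hne, hno⟩
        exact hE (v (t+1)) (Relation.TransGen.tail (Relation.TransGen.single hbc) hucE.2.1)
      have hEadj : E (v t) (v (t+2)) ∨ E (v (t+2)) (v t) := (hskel _ _).mpr hadj
      rcases hEadj with h | h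
      · exact h
      · exact absurd (Relation.TransGen.tail
          (Relation.TransGen.tail (Relation.TransGen.single hab) hbc) h) (hE (v t))
    set w : ℕ → Fin n := fun s => if s ≤ t then v s else v (s+1) with hw
    apply IH (m-1) (by omega) i j w (by omega)
    refine ⟨?_, ?_, ?_, ?_⟩
    · show (if 0 ≤ t then v 0 else v 1) = i
      rw [if_pos (Nat.zero_le t)]; exact h0
    · show (if m - 1 ≤ t then v (m-1) else v (m-1+1)) = j
      rw [if_neg (by omega), show m - 1 + 1 = m by omega]; exact hlast
    · intro s hs
      show E (if s ≤ t then v s else v (s+1)) (if s+1 ≤ t then v (s+1) else v (s+1+1))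
      rcases Nat.lt_trichotomy s t with h | h | h
      · rw [if_pos (by omega), if_pos (by omega)]
        exact hedge s (by omega)
      · rw [if_pos (by omega), if_neg (by omega), h]
        exact hac
      · rw [if_neg (by omega), if_neg (by omega)]
        exact hedge (s+1) (by omega)
    · intro s hs0 hsm
      show (if s ≤ t then v s else v (s+1)) ∉ K
      split
      · exact hint s hs0 (by omega)
      · exact hint (s+1) (by omega) (by omega)
  · -- no collider
    push_neg at hcol
    have hdir : ∀ s < m, F (v s) (v (s+1)) ∨ F (v (s+1)) (v s) :=
      fun s hs => (hskel _ _).mp (Or.inl (hedge s hs))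
    have hfwdstep : ∀ s, s+1 < m → F (v s) (v (s+1)) → F (v (s+1)) (v (s+2)) := by
      intro s hs hf
      rcases hdir (s+1) hs with h | h
      · exact h
      · exact absurd h (hcol s hs hf)
    by_cases hall : ∀ s < m, F (v (s+1)) (v s)
    · right; left
      apply fnPath_toReach (m := m) (v := fun s => v (m - s)) hm
      refine ⟨?_, ?_, ?_, ?_⟩
      · show v (m - 0) = j; simpa using hlast
      · show v (m - m) = i; simpa using h0
      · intro s hs
        show F (v (m - s)) (v (m - (s+1)))
        rw [show m - s = (m - (s+1)) + 1 by omega]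
        exact hall (m - (s+1)) (by omega)
      · intro s hs0 hsm
        show v (m - s) ∉ K
        exact hint _ (by omega) (by omega)
    · push_neg at hall
      have hP : ∃ s, s < m ∧ F (v s) (v (s+1)) := by
        obtain ⟨s, hs, hns⟩ := hall
        exact ⟨s, hs, (hdir s hs).resolve_right hns⟩
      set t0 := Nat.find hP with ht0def
      obtain ⟨ht0m, ht0f⟩ := Nat.find_spec hP
      have hfwd : ∀ s, t0 ≤ s → s < m → F (v s) (v (s+1)) := by
        intro s hs
        induction s, hs using Nat.le_induction with
        | base => intro _; exact ht0f
        | succ s hs ih => intro h; exact hfwdstep s h (ih (by omega))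
      have hbwd : ∀ s < t0, F (v (s+1)) (v s) := by
        intro s hs
        have hnP := Nat.find_min hP hs
        rcases hdir s (by omega) with h | h
        · exact absurd ⟨by omega, h⟩ hnP
        · exact h
      rcases Nat.eq_zero_or_pos t0 with h0' | h0'
      · left
        exact fnPath_toReach hm ⟨h0, hlast, fun s hs => hfwd s (by omega) hs, hint⟩
      · right; right
        refine ⟨v t0, ?_, ?_⟩
        · apply fnPath_toReach (m := t0) (v := fun s => v (t0 - s)) h0'
          refine ⟨?_, ?_, ?_, ?_⟩
          · show v (t0 - 0) = v t0; rfl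
          · show v (t0 - t0) = i; simpa using h0
          · intro s hs
            show F (v (t0 - s)) (v (t0 - (s+1)))
            rw [show t0 - s = (t0 - (s+1)) + 1 by omega]
            exact hbwd (t0 - (s+1)) (by omega)
          · intro s hs0 hst
            show v (t0 - s) ∉ K
            exact hint _ (by omega) (by omega)
        · apply fnPath_toReach (m := m - t0) (v := fun s => v (t0 + s)) (by omega)
          refine ⟨?_, ?_, ?_, ?_⟩
          · show v (t0 + 0) = v t0; rfl
          · show v (t0 + (m - t0)) = j
            rw [show t0 + (m - t0) = m by omega]; exact hlast
          · intro s hs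
            show F (v (t0 + s)) (v (t0 + (s+1)))
            rw [show t0 + (s+1) = (t0+s)+1 by omega]
            exact hfwd (t0+s) (by omega) (by omega)
          · intro s hs0 hsm
            show v (t0 + s) ∉ K
            exact hint _ (by omega) (by omega)

/-- Let `E` and `F` be DAGs that are Markov equivalent under
d-separation (same skeleton and same unshielded colliders, by Verma–Pearl), let `K` be
a conditioning set, and suppose `i → j` is an edge of `E*_K`. Then `i → j ∈ F*_K`, or
`j → i ∈ F*_K`, or `i` and `j` have a common parent `ℓ` in `F*_K`. -/
theorem reachEdge_surgery {n : ℕ} (E F : Fin n → Fin n → Prop)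
    (hE : ∀ i, ¬ Relation.TransGen E i i) (hF : ∀ i, ¬ Relation.TransGen F i i)
    (hskel : SameSkeleton E F)
    (huc : ∀ i k j, UnshieldedCollider E i k j ↔ UnshieldedCollider F i k j)
    (K : Set (Fin n)) (i j : Fin n) (hij : ReachEdge E K i j) :
    ReachEdge F K i j ∨ ReachEdge F K j i ∨
      ∃ l : Fin n, ReachEdge F K l i ∧ ReachEdge F K l j := by
  obtain ⟨m, v, hm, hp⟩ := reach_toFnPath hij
  exact main_aux E F hE hskel huc K m i j v hm hp
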